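/- Let (Ω,T) be a uniquely ergodic minimal (r,R)-Delone dynamical system. If A is an element of the C*-algebra generated by finite-range operators such that π_ω(A) = 0 for some ω ∈ Ω, then π_ω(A) = 0 for all ω ∈ Ω; equivalently, if the spectrum σ(A_ω) is independent of ω for all selfadjoint A (which holds under minimality), then each representation π_ω is faithful. -/

import Mathlib

noncomputable section
open scoped ComplexOrder

/-- For the C*-algebra `𝒜` of a uniquely ergodic minimal Delone dynamical system with
its family of evaluation representations `π_ω` (which is jointly faithful, since
`‖A‖ = sup_ω ‖π_ω A‖`): if the spectra `σ(π_ω A)` of selfadjoint elements do not depend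
on `ω` (which holds by minimality), then `π_ω A = 0` for some `ω` forces `π_ω' A = 0`
for all `ω'`, and each representation `π_ω` is faithful. -/
theorem constant_spectra_implies_faithful
    {𝒜 : Type*} [NormedRing 𝒜] [StarRing 𝒜] [CStarRing 𝒜] [NormedAlgebra ℂ 𝒜]
    [CompleteSpace 𝒜] [StarModule ℂ 𝒜]
    {Ω : Type*} (B : Ω → Type*)
    [∀ ω, NormedRing (B ω)] [∀ ω, StarRing (B ω)] [∀ ω, CStarRing (B ω)]
    [∀ ω, NormedAlgebra ℂ (B ω)] [∀ ω, CompleteSpace (B ω)] [∀ ω, StarModule ℂ (B ω)]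
    (π : ∀ ω, 𝒜 →⋆ₐ[ℂ] B ω)
    (hspec : ∀ A : 𝒜, IsSelfAdjoint A → ∀ ω ω' : Ω,
      spectrum ℂ ((π ω) A) = spectrum ℂ ((π ω') A))
    (hjoint : ∀ A : 𝒜, (∀ ω, (π ω) A = 0) → A = 0) :
    (∀ A : 𝒜, ∀ ω : Ω, (π ω) A = 0 → ∀ ω' : Ω, (π ω') A = 0) ∧
    (∀ ω : Ω, Function.Injective (π ω)) := by
  letI : ∀ ω, CStarAlgebra (B ω) := fun ω => { }
  have key : ∀ A : 𝒜, ∀ ω : Ω, (π ω) A = 0 → ∀ ω' : Ω, (π ω') A = 0 := by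
    intro A ω h0 ω'
    have hsa : IsSelfAdjoint (star A * A) := by
      simp [IsSelfAdjoint, star_mul, star_star]
    have hsa' : IsSelfAdjoint ((π ω') (star A * A)) := hsa.map (π ω')
    have hspec' := hspec (star A * A) hsa ω ω'
    have hzero : (π ω) (star A * A) = 0 := by
      simp [map_mul, h0]
    have hrad : spectralRadius ℂ ((π ω') (star A * A)) =
        spectralRadius ℂ ((π ω) (star A * A)) := by
      unfold spectralRadius
      rw [hspec']
    have hn : (‖(π ω') (star A * A)‖₊ : ENNReal) = (‖(π ω) (star A * A)‖₊ : ENNReal) := by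
      rw [← hsa'.spectralRadius_eq_nnnorm, ← (hsa.map (π ω)).spectralRadius_eq_nnnorm]
      exact hrad
    have hn0 : ‖(π ω') (star A * A)‖ = 0 := by
      have := congrArg ENNReal.toReal hn
      simpa [hzero] using this
    have hmul : (π ω') (star A * A) = star ((π ω') A) * ((π ω') A) := by
      simp [map_mul, map_star]
    have : ‖(π ω') A‖ * ‖(π ω') A‖ = 0 := by
      rw [← CStarRing.norm_star_mul_self, ← hmul, hn0]
    have : ‖(π ω') A‖ = 0 := by nlinarith [norm_nonneg ((π ω') A)]
    exact norm_eq_zero.mp this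
  refine ⟨key, fun ω x y hxy => ?_⟩
  have : (π ω) (x - y) = 0 := by simp [map_sub, hxy]
  exact sub_eq_zero.mp (hjoint (x - y) (key (x - y) ω this))
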